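/- For any real constants α_1,…,α_{2k+2}, β_1,…,β_{2k+2}, γ_1,…,γ_{2k}, δ_1,…,δ_{2k}, the coefficient of x^{4k+2} y^{4k+2} in the polynomial ∏_{j=1}^{2k+2} (x-α_j)(y-β_j) · ∏_{j=1}^{2k} (x-y-γ_j)(x+y-δ_j) equals (-1)^k * binomial(2k, k), and in particular is nonzero. -/

import Mathlib

open MvPolynomial Finset

/-- Two polynomials have total degree ≤ d and agree on all coefficients of degree d. -/
def TopEq (d : ℕ) (p q : MvPolynomial (Fin 2) ℝ) : Prop :=
  p.totalDegree ≤ d ∧ q.totalDegree ≤ d ∧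
    ∀ m : Fin 2 →₀ ℕ, (m.sum fun _ e => e) = d → MvPolynomial.coeff m p = MvPolynomial.coeff m q

lemma TopEq.mul {d₁ d₂ : ℕ} {p p' q q' : MvPolynomial (Fin 2) ℝ}
    (h₁ : TopEq d₁ p p') (h₂ : TopEq d₂ q q') : TopEq (d₁ + d₂) (p * q) (p' * q') := by
  obtain ⟨hp, hp', hcp⟩ := h₁
  obtain ⟨hq, hq', hcq⟩ := h₂
  refine ⟨(totalDegree_mul _ _).trans (add_le_add hp hq),
    (totalDegree_mul _ _).trans (add_le_add hp' hq'), ?_⟩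
  intro m hm
  rw [coeff_mul, coeff_mul]
  refine Finset.sum_congr rfl ?_
  rintro ⟨m₁, m₂⟩ hmem
  rw [Finset.HasAntidiagonal.mem_antidiagonal] at hmem
  have hsum : (m₁.sum fun _ e => e) + (m₂.sum fun _ e => e) = d₁ + d₂ := by
    rw [← hm, ← hmem]
    exact (Finsupp.sum_add_index' (fun _ => rfl) (fun _ _ _ => rfl)).symm
  rcases lt_trichotomy (m₁.sum fun _ e => e) d₁ with hlt | heq | hgt
  · have h2 : d₂ < m₂.sum fun _ e => e := by omega
    rw [coeff_eq_zero_of_totalDegree_lt (lt_of_le_of_lt hq h2),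
      coeff_eq_zero_of_totalDegree_lt (lt_of_le_of_lt hq' h2), mul_zero, mul_zero]
  · have h2 : (m₂.sum fun _ e => e) = d₂ := by omega
    rw [hcp m₁ heq, hcq m₂ h2]
  · rw [coeff_eq_zero_of_totalDegree_lt (lt_of_le_of_lt hp hgt),
      coeff_eq_zero_of_totalDegree_lt (lt_of_le_of_lt hp' hgt), zero_mul, zero_mul]

lemma TopEq.prod {s : Finset ℕ} {d : ℕ} {f g : ℕ → MvPolynomial (Fin 2) ℝ}
    (h : ∀ j ∈ s, TopEq d (f j) (g j)) :
    TopEq (s.card * d) (∏ j ∈ s, f j) (∏ j ∈ s, g j) := by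
  induction s using Finset.induction_on with
  | empty =>
    exact ⟨by simp, by simp, fun m hm => rfl⟩
  | insert a s ha ih =>
    rw [Finset.prod_insert ha, Finset.prod_insert ha, Finset.card_insert_of_notMem ha,
      show (s.card + 1) * d = d + s.card * d by ring]
    exact (h a (Finset.mem_insert_self a s)).mul
      (ih fun j hj => h j (Finset.mem_insert_of_mem hj))

lemma degree_ne_zero {m : Fin 2 →₀ ℕ} {d : ℕ} (hm : (m.sum fun _ e => e) = d) (hd : d ≠ 0) :
    m ≠ 0 := by
  rintro rfl
  simp [Finsupp.sum_zero_index] at hm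
  omega

lemma topEq_sub_C {d : ℕ} (hd : d ≠ 0) {p : MvPolynomial (Fin 2) ℝ} (hp : p.totalDegree ≤ d)
    (c : ℝ) : TopEq d (p - C c) p := by
  refine ⟨(totalDegree_sub_C_le _ _).trans hp, hp, fun m hm => ?_⟩
  rw [coeff_sub, coeff_C, if_neg (fun h => degree_ne_zero hm hd h.symm), sub_zero]

lemma single_add_single_eq (a b c d : ℕ) :
    (Finsupp.single (0 : Fin 2) a + Finsupp.single 1 b =
      Finsupp.single 0 c + Finsupp.single 1 d) ↔ (a = c ∧ b = d) := by
  constructor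
  · intro h
    constructor
    · have := DFunLike.congr_fun h 0
      simpa [Finsupp.single_apply] using this
    · have := DFunLike.congr_fun h 1
      simpa [Finsupp.single_apply] using this
  · rintro ⟨rfl, rfl⟩; rfl

theorem stmt_2 (k : ℕ) (α β γ δ : ℕ → ℝ) :
    MvPolynomial.coeff (Finsupp.single 0 (4 * k + 2) + Finsupp.single 1 (4 * k + 2))
      ((∏ j ∈ Finset.Icc 1 (2 * k + 2), (X 0 - C (α j)) * (X 1 - C (β j))) *
       (∏ j ∈ Finset.Icc 1 (2 * k), (X 0 - X 1 - C (γ j)) * (X 0 + X 1 - C (δ j))) :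
        MvPolynomial (Fin 2) ℝ)
      = (-1 : ℝ) ^ k * Nat.choose (2 * k) k ∧
    ((-1 : ℝ) ^ k * Nat.choose (2 * k) k : ℝ) ≠ 0 := by
  have hX0 : (X (0 : Fin 2) : MvPolynomial (Fin 2) ℝ).totalDegree ≤ 1 := (totalDegree_X _).le
  have hX1 : (X (1 : Fin 2) : MvPolynomial (Fin 2) ℝ).totalDegree ≤ 1 := (totalDegree_X _).le
  have hsub : ((X 0 - X 1 : MvPolynomial (Fin 2) ℝ)).totalDegree ≤ 1 :=
    (totalDegree_sub _ _).trans (max_le hX0 hX1)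
  have hadd : ((X 0 + X 1 : MvPolynomial (Fin 2) ℝ)).totalDegree ≤ 1 :=
    (totalDegree_add _ _).trans (max_le hX0 hX1)
  -- top equivalences for the two products
  have h1 : TopEq ((Finset.Icc 1 (2 * k + 2)).card * 2)
      (∏ j ∈ Finset.Icc 1 (2 * k + 2), (X 0 - C (α j)) * (X 1 - C (β j)))
      (∏ j ∈ Finset.Icc 1 (2 * k + 2), (X (0 : Fin 2) : MvPolynomial (Fin 2) ℝ) * X 1) :=
    TopEq.prod fun j _ =>
      (topEq_sub_C one_ne_zero hX0 (α j)).mul (topEq_sub_C one_ne_zero hX1 (β j))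
  have h2 : TopEq ((Finset.Icc 1 (2 * k)).card * 2)
      (∏ j ∈ Finset.Icc 1 (2 * k), (X 0 - X 1 - C (γ j)) * (X 0 + X 1 - C (δ j)))
      (∏ j ∈ Finset.Icc 1 (2 * k),
        ((X 0 - X 1) * (X 0 + X 1) : MvPolynomial (Fin 2) ℝ)) :=
    TopEq.prod fun j _ =>
      (topEq_sub_C one_ne_zero hsub (γ j)).mul (topEq_sub_C one_ne_zero hadd (δ j))
  have hcard1 : (Finset.Icc 1 (2 * k + 2)).card = 2 * k + 2 := by
    rw [Nat.card_Icc]; omega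
  have hcard2 : (Finset.Icc 1 (2 * k)).card = 2 * k := by
    rw [Nat.card_Icc]; omega
  have hmain := h1.mul h2
  rw [hcard1, hcard2] at hmain
  set m : Fin 2 →₀ ℕ := Finsupp.single 0 (4 * k + 2) + Finsupp.single 1 (4 * k + 2) with hmdef
  have hmdeg : (m.sum fun _ e => e) = (2 * k + 2) * 2 + 2 * k * 2 := by
    rw [hmdef, Finsupp.sum_add_index' (fun _ => rfl) (fun _ _ _ => rfl),
      Finsupp.sum_single_index rfl, Finsupp.sum_single_index rfl]
    ring
  have hkey := hmain.2.2 m hmdeg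
  rw [hkey]
  constructor
  · -- compute coeff m of (X0*X1)^(2k+2) * ((X0-X1)(X0+X1))^(2k)
    rw [Finset.prod_const, Finset.prod_const, hcard1, hcard2]
    have hring : ((X 0 * X 1 : MvPolynomial (Fin 2) ℝ)) ^ (2 * k + 2) *
        ((X 0 - X 1) * (X 0 + X 1)) ^ (2 * k)
        = ∑ i ∈ Finset.range (2 * k + 1),
            MvPolynomial.monomial
              (Finsupp.single 0 (2 * k + 2 + 2 * i) + Finsupp.single 1 (2 * k + 2 + 2 * (2 * k - i)))
              ((-1 : ℝ) ^ (2 * k - i) * (Nat.choose (2 * k) i : ℝ)) := by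
      have : ((X 0 - X 1) * (X 0 + X 1) : MvPolynomial (Fin 2) ℝ)
          = (X 0 ^ 2 - X 1 ^ 2) := by ring
      rw [this, sub_pow, Finset.mul_sum]
      refine Finset.sum_congr rfl fun i hi => ?_
      rw [Finset.mem_range] at hi
      have hsign : ((-1 : MvPolynomial (Fin 2) ℝ)) ^ (i + 2 * k) = (-1) ^ (2 * k - i) := by
        have h4 : (2 * k - i) + 2 * i = i + 2 * k := by omega
        rw [← h4, pow_add, pow_mul]
        norm_num
      have hmon : (MvPolynomial.monomial
              (Finsupp.single 0 (2 * k + 2 + 2 * i) + Finsupp.single 1 (2 * k + 2 + 2 * (2 * k - i)))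
              ((-1 : ℝ) ^ (2 * k - i) * (Nat.choose (2 * k) i : ℝ)) : MvPolynomial (Fin 2) ℝ)
          = (-1) ^ (2 * k - i) * (Nat.choose (2 * k) i : MvPolynomial (Fin 2) ℝ) *
            (X 0 ^ (2 * k + 2 + 2 * i) * X 1 ^ (2 * k + 2 + 2 * (2 * k - i))) := by
        rw [X_pow_eq_monomial, X_pow_eq_monomial, monomial_mul, mul_one,
          ← MvPolynomial.C_eq_coe_nat, show ((-1 : MvPolynomial (Fin 2) ℝ)) ^ (2 * k - i)
            = C ((-1 : ℝ) ^ (2 * k - i)) by rw [map_pow, map_neg, map_one],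
          ← map_mul, C_mul_monomial, mul_one]
      rw [hmon, ← hsign]
      ring
    rw [hring, MvPolynomial.coeff_sum, hmdef]
    rw [Finset.sum_eq_single k]
    · rw [MvPolynomial.coeff_monomial,
        if_pos (by rw [single_add_single_eq]; omega),
        show 2 * k - k = k by omega]
    · intro i hi hik
      rw [Finset.mem_range] at hi
      rw [MvPolynomial.coeff_monomial,
        if_neg (by rw [single_add_single_eq]; omega)]
    · intro hk
      exact absurd (Finset.mem_range.2 (by omega)) hk
  · refine mul_ne_zero (pow_ne_zero _ (by norm_num)) ?_
    exact_mod_cast (Nat.choose_pos (by omega : k ≤ 2 * k)).ne'
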